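/- There exists a family of plaquettes (unit squares) of the lattice ℤ^d such that every edge of ℤ^d belongs to exactly one plaquette in the family. Explicitly, with π_j(x) = (−1)^{x_j} denoting the parity of the j-th coordinate of x ∈ ℤ^d, the family consisting of, for each site x and each j ∈ {1,...,d}, the plaquette with corner x spanned first by π_j(x)·e_j and then by −π_{j+1}(x)·e_{j+1} (indices mod d, with e_{d+1} := e_1), covers every edge exactly once. -/

import Mathlib

/-- The `j`-th standard unit vector in `ℤ^d`. -/
def unitVec (d : ℕ) (j : Fin d) : Fin d → ℤ := fun i => if i = j then 1 else 0

/-- The parity `π_j(x) = (-1)^{x_j}` of the `j`-th coordinate of `x ∈ ℤ^d`. -/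
def coordParity (d : ℕ) (x : Fin d → ℤ) (j : Fin d) : ℤ :=
  if Even (x j) then 1 else -1

/-- The plaquette `[u ⋄ v]_x`: the set of the four edges (unordered pairs of
nearest-neighbour sites) of the unit square with corner `x` and sides `u`, `v`. -/
def plaquette (d : ℕ) (x u v : Fin d → ℤ) : Set (Sym2 (Fin d → ℤ)) :=
  {s(x, x + u), s(x, x + v), s(x + u, x + u + v), s(x + v, x + u + v)}

/-- The plaquette specified by the parity instructions at site `x` in
direction `j`, namely `[π_j(x)·e_j ⋄ -π_{j+1}(x)·e_{j+1}]_x`. -/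
def instrPlaquette (d : ℕ) [NeZero d] (x : Fin d → ℤ) (j : Fin d) :
    Set (Sym2 (Fin d → ℤ)) :=
  plaquette d x (coordParity d x j • unitVec d j)
    (-(coordParity d x (j + 1)) • unitVec d (j + 1))

lemma plaq_flip_u (d : ℕ) (x u v : Fin d → ℤ) : plaquette d (x + u) (-u) v = plaquette d x u v := by
  unfold plaquette
  have e1 : x + u + -u = x := by abel
  rw [e1]
  ext s
  simp only [Set.mem_insert_iff, Set.mem_singleton_iff]
  constructor
  · rintro (h|h|h|h)
    · exact Or.inl (h.trans Sym2.eq_swap)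
    · exact Or.inr (Or.inr (Or.inl h))
    · exact Or.inr (Or.inl h)
    · exact Or.inr (Or.inr (Or.inr (h.trans Sym2.eq_swap)))
  · rintro (h|h|h|h)
    · exact Or.inl (h.trans Sym2.eq_swap)
    · exact Or.inr (Or.inr (Or.inl h))
    · exact Or.inr (Or.inl h)
    · exact Or.inr (Or.inr (Or.inr (h.trans Sym2.eq_swap)))

lemma plaq_flip_v (d : ℕ) (x u v : Fin d → ℤ) : plaquette d (x + v) u (-v) = plaquette d x u v := by
  unfold plaquette
  have e1 : x + v + -v = x := by abel
  have e2 : x + v + u + -v = x + u := by abel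
  rw [e1, e2]
  have e3 : x + v + u = x + u + v := by abel
  rw [e3]
  ext s
  simp only [Set.mem_insert_iff, Set.mem_singleton_iff]
  constructor
  · rintro (h|h|h|h)
    · exact Or.inr (Or.inr (Or.inr h))
    · exact Or.inr (Or.inl (h.trans Sym2.eq_swap))
    · exact Or.inr (Or.inr (Or.inl (h.trans Sym2.eq_swap)))
    · exact Or.inl h
  · rintro (h|h|h|h)
    · exact Or.inr (Or.inr (Or.inr h))
    · exact Or.inr (Or.inl (h.trans Sym2.eq_swap))
    · exact Or.inr (Or.inr (Or.inl (h.trans Sym2.eq_swap)))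
    · exact Or.inl h

lemma cp_cases (d : ℕ) (x : Fin d → ℤ) (m : Fin d) :
    coordParity d x m = 1 ∨ coordParity d x m = -1 := by
  unfold coordParity; split_ifs <;> simp

lemma cp_eq_one_iff (d : ℕ) (x : Fin d → ℤ) (m : Fin d) :
    coordParity d x m = 1 ↔ Even (x m) := by
  unfold coordParity; split_ifs with h <;> simp [h]

lemma cp_eq_neg_one_iff (d : ℕ) (x : Fin d → ℤ) (m : Fin d) :
    coordParity d x m = -1 ↔ ¬ Even (x m) := by
  unfold coordParity; split_ifs with h <;> simp [h]

lemma cp_congr (d : ℕ) (x y : Fin d → ℤ) (m : Fin d) (h : x m = y m) :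
    coordParity d x m = coordParity d y m := by
  unfold coordParity; rw [h]

lemma cp_flip (d : ℕ) (x a : Fin d → ℤ) (m : Fin d) (e : ℤ) (he : e = 1 ∨ e = -1)
    (hxm : x m = a m + e) : coordParity d a m = -coordParity d x m := by
  unfold coordParity
  rcases he with rfl | rfl <;> rw [hxm] <;> by_cases h : Even (a m) <;>
    simp [h, Int.even_add_one, Int.even_sub, parity_simps, ← Int.not_even_iff_odd]

lemma dir_eq {d : ℕ} (c t : ℤ) (j k : Fin d) (ht : t ≠ 0)
    (h : c • unitVec d j = t • unitVec d k) : j = k ∧ c = t := by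
  have hk := congrFun h k
  simp only [Pi.smul_apply, unitVec, smul_eq_mul] at hk
  by_cases hkj : k = j
  · subst hkj
    simp only [eq_self_iff_true, if_true, mul_one] at hk
    exact ⟨rfl, hk⟩
  · simp only [hkj, if_false, eq_self_iff_true, if_true, mul_zero, mul_one] at hk
    exact absurd hk.symm ht

lemma one_ne_zero_fin {d : ℕ} [NeZero d] (hd : 2 ≤ d) : (1 : Fin d) ≠ 0 := by
  intro h
  have := congrArg Fin.val h
  rw [Fin.val_one', Nat.mod_eq_of_lt (by omega)] at this
  simp at this

lemma add_one_ne {d : ℕ} [NeZero d] (hd : 2 ≤ d) (k : Fin d) : k + 1 ≠ k := by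
  intro h
  have : (1 : Fin d) = 0 := by
    have := congrArg (fun z => z - k) h
    simpa [add_comm, add_sub_cancel_right, sub_self] using this
  exact one_ne_zero_fin hd this

lemma sub_one_ne {d : ℕ} [NeZero d] (hd : 2 ≤ d) (k : Fin d) : k - 1 ≠ k := by
  intro h
  have : (1 : Fin d) = 0 := by
    have := congrArg (fun z => k - z) h
    simpa [sub_sub_cancel, sub_self] using this
  exact (one_ne_zero_fin hd this)

lemma Q_even {d : ℕ} [NeZero d] (a : Fin d → ℤ) (k : Fin d) (ha : Even (a k)) :
    instrPlaquette d a k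
      = plaquette d a (unitVec d k) (-(coordParity d a (k + 1)) • unitVec d (k + 1)) := by
  unfold instrPlaquette
  rw [(cp_eq_one_iff d a k).mpr ha, one_smul]

lemma Q_odd {d : ℕ} [NeZero d] (a : Fin d → ℤ) (k : Fin d) (ha : ¬ Even (a k)) :
    instrPlaquette d a (k - 1)
      = plaquette d a (coordParity d a (k - 1) • unitVec d (k - 1)) (unitVec d k) := by
  unfold instrPlaquette
  rw [sub_add_cancel, (cp_eq_neg_one_iff d a k).mpr ha]
  norm_num


lemma shift_neg {G : Type*} [AddCommGroup G] {a w u : G} (h : a + w + u = a) : u = -w := by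
  have h4 : a + (w + u) = a + 0 := by rw [add_zero, ← add_assoc]; exact h
  have h5 := add_left_cancel h4
  have := eq_neg_of_add_eq_zero_right h5
  simpa using this

lemma uniq {d : ℕ} [NeZero d] (hd : 2 ≤ d) (a x : Fin d → ℤ) (k j : Fin d)
    (hmem : s(a, a + unitVec d k) ∈ instrPlaquette d x j) :
    instrPlaquette d x j =
      if Even (a k) then instrPlaquette d a k else instrPlaquette d a (k - 1) := by
  have hd1 : ¬ d = 1 := by omega
  have hk1 : k - 1 + 1 = k := sub_add_cancel k 1
  have hkne : k ≠ k - 1 := (sub_one_ne hd k).symm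
  have hkne' : k ≠ k + 1 := (add_one_ne hd k).symm
  simp only [instrPlaquette, plaquette, Set.mem_insert_iff, Set.mem_singleton_iff,
    Sym2.eq_iff] at hmem
  rcases hmem with (⟨h1,h2⟩|⟨h1,h2⟩)|(⟨h1,h2⟩|⟨h1,h2⟩)|(⟨h1,h2⟩|⟨h1,h2⟩)|(⟨h1,h2⟩|⟨h1,h2⟩)
  -- Case 1a : x = a, u = e_k
  · subst h1
    have h2' : coordParity d a j • unitVec d j = (1 : ℤ) • unitVec d k := by
      rw [one_smul]; exact (add_left_cancel h2).symm
    obtain ⟨hjk, hc⟩ := dir_eq _ _ _ _ (one_ne_zero) h2'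
    replace hjk := hjk.symm; subst hjk
    have ha : Even (a k) := (cp_eq_one_iff d a k).mp hc
    rw [if_pos ha]
  -- Case 1b : x = a + e_k, u = -e_k
  · have hx : x = a + unitVec d k := h2.symm
    subst hx
    have hu : coordParity d (a + unitVec d k) j • unitVec d j = (-1 : ℤ) • unitVec d k := by
      have h3 : a + unitVec d k + coordParity d (a + unitVec d k) j • unitVec d j = a := h1.symm
      rw [shift_neg h3, neg_smul, one_smul]
    obtain ⟨hjk, hc⟩ := dir_eq _ _ _ _ (by norm_num : (-1 : ℤ) ≠ 0) hu
    replace hjk := hjk.symm; subst hjk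
    have hxk : (a + unitVec d k) k = a k + 1 := by simp [unitVec]
    have hxk1 : (a + unitVec d k) (k + 1) = a (k + 1) := by simp [unitVec, hkne', hd1]
    have hnx : ¬ Even ((a + unitVec d k) k) := (cp_eq_neg_one_iff d _ k).mp hc
    have ha : Even (a k) := by
      rw [hxk, Int.even_add_one] at hnx; simpa using hnx
    rw [if_pos ha, Q_even a k ha]
    show plaquette d (a + unitVec d k) _ _ = _
    rw [hc, cp_congr d _ a (k + 1) hxk1, neg_one_smul]
    exact plaq_flip_u d a (unitVec d k) _
  -- Case 2a : x = a, v = e_k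
  · subst h1
    have h2' : -coordParity d a (j + 1) • unitVec d (j + 1) = (1 : ℤ) • unitVec d k := by
      rw [one_smul]; exact (add_left_cancel h2).symm
    obtain ⟨hjk, hc⟩ := dir_eq _ _ _ _ (one_ne_zero) h2'
    have hj : j = k - 1 := by rw [← hjk, add_sub_cancel_right]
    subst hj
    rw [hk1] at hc
    have ha : ¬ Even (a k) := (cp_eq_neg_one_iff d a k).mp (by linarith)
    rw [if_neg ha]
  -- Case 2b : x = a + e_k, v = -e_k
  · have hx : x = a + unitVec d k := h2.symm
    subst hx
    have hv : -coordParity d (a + unitVec d k) (j + 1) • unitVec d (j + 1)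
        = (-1 : ℤ) • unitVec d k := by
      have h3 : a + unitVec d k
          + -coordParity d (a + unitVec d k) (j + 1) • unitVec d (j + 1) = a := h1.symm
      rw [shift_neg h3, neg_smul, one_smul]
    obtain ⟨hjk, hc⟩ := dir_eq _ _ _ _ (by norm_num : (-1 : ℤ) ≠ 0) hv
    have hj : j = k - 1 := by rw [← hjk, add_sub_cancel_right]
    subst hj
    rw [hk1] at hc
    have hcp : coordParity d (a + unitVec d k) k = 1 := by linarith
    have hxk : (a + unitVec d k) k = a k + 1 := by simp [unitVec]
    have hxk1 : (a + unitVec d k) (k - 1) = a (k - 1) := by simp [unitVec, hkne, hd1]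
    have hex : Even ((a + unitVec d k) k) := (cp_eq_one_iff d _ k).mp hcp
    have ha : ¬ Even (a k) := by
      rw [hxk, Int.even_add_one] at hex; simpa using hex
    rw [if_neg ha, Q_odd a k ha]
    show plaquette d (a + unitVec d k) _ _ = _
    rw [hk1, hcp, cp_congr d _ a (k - 1) hxk1, neg_one_smul]
    exact plaq_flip_v d a _ (unitVec d k)
  -- Case 3a : x + u = a, v = e_k
  · rw [← h1] at h2
    have hv : -coordParity d x (j + 1) • unitVec d (j + 1) = (1 : ℤ) • unitVec d k := by
      rw [one_smul]; exact (add_left_cancel h2).symm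
    obtain ⟨hjk, hc⟩ := dir_eq _ _ _ _ (one_ne_zero) hv
    have hj : j = k - 1 := by rw [← hjk, add_sub_cancel_right]
    subst hj
    rw [hk1] at hc
    have hcp : coordParity d x k = -1 := by linarith
    have hx : x = a - coordParity d x (k - 1) • unitVec d (k - 1) := eq_sub_of_add_eq h1.symm
    have hxk : x k = a k := by
      have := congrFun hx k; simpa [unitVec, hkne, hd1] using this
    have ha : ¬ Even (a k) := by
      rw [← hxk]; exact (cp_eq_neg_one_iff d x k).mp hcp
    have hx1 : x (k - 1) = a (k - 1) + -coordParity d x (k - 1) := by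
      have := congrFun hx (k - 1)
      simpa [unitVec, hd1, sub_eq_add_neg] using this
    have hflip : coordParity d a (k - 1) = -coordParity d x (k - 1) := by
      apply cp_flip d x a (k - 1) _ _ hx1
      rcases cp_cases d x (k - 1) with h | h <;> rw [h] <;> norm_num
    have hcx : coordParity d x (k - 1) = -coordParity d a (k - 1) := by linarith
    have hx' : x = a + coordParity d a (k - 1) • unitVec d (k - 1) := by
      rw [hx, hcx, neg_smul, sub_neg_eq_add]
    rw [if_neg ha, Q_odd a k ha]
    show plaquette d x _ _ = _
    rw [hk1, hcp, neg_neg, one_smul, hcx, neg_smul, hx']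
    exact plaq_flip_u d a _ (unitVec d k)
  -- Case 3b : x + u = a + e_k, v = -e_k
  · have h2' : x + coordParity d x j • unitVec d j = a + unitVec d k := h2.symm
    rw [h2'] at h1
    have hv : -coordParity d x (j + 1) • unitVec d (j + 1) = (-1 : ℤ) • unitVec d k := by
      have h3 : a + unitVec d k
          + -coordParity d x (j + 1) • unitVec d (j + 1) = a := h1.symm
      rw [shift_neg h3, neg_smul, one_smul]
    obtain ⟨hjk, hc⟩ := dir_eq _ _ _ _ (by norm_num : (-1 : ℤ) ≠ 0) hv
    have hj : j = k - 1 := by rw [← hjk, add_sub_cancel_right]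
    subst hj
    rw [hk1] at hc
    have hcp : coordParity d x k = 1 := by linarith
    have hx : x = a + unitVec d k - coordParity d x (k - 1) • unitVec d (k - 1) :=
      eq_sub_of_add_eq h2'
    have hxk : x k = a k + 1 := by
      have := congrFun hx k; simpa [unitVec, hkne, hd1] using this
    have hex : Even (x k) := (cp_eq_one_iff d x k).mp hcp
    have ha : ¬ Even (a k) := by
      rw [hxk, Int.even_add_one] at hex; simpa using hex
    have hx1 : x (k - 1) = a (k - 1) + -coordParity d x (k - 1) := by
      have := congrFun hx (k - 1)
      simpa [unitVec, hkne, hd1, sub_eq_add_neg] using this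
    have hflip : coordParity d a (k - 1) = -coordParity d x (k - 1) := by
      apply cp_flip d x a (k - 1) _ _ hx1
      rcases cp_cases d x (k - 1) with h | h <;> rw [h] <;> norm_num
    have hcx : coordParity d x (k - 1) = -coordParity d a (k - 1) := by linarith
    have hx' : x = a + unitVec d k + coordParity d a (k - 1) • unitVec d (k - 1) := by
      rw [hx, hcx, neg_smul, sub_neg_eq_add]
    rw [if_neg ha, Q_odd a k ha]
    show plaquette d x _ _ = _
    rw [hk1, hcp, neg_one_smul, hcx, neg_smul, hx']
    rw [plaq_flip_u d (a + unitVec d k) (coordParity d a (k - 1) • unitVec d (k - 1))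
      (-unitVec d k)]
    exact plaq_flip_v d a _ (unitVec d k)
  -- Case 4a : x + v = a, u = e_k
  · have h2' : x + coordParity d x j • unitVec d j
        + -coordParity d x (j + 1) • unitVec d (j + 1)
        = a + coordParity d x j • unitVec d j := by rw [h1]; abel
    rw [h2'] at h2
    have hu : coordParity d x j • unitVec d j = (1 : ℤ) • unitVec d k := by
      rw [one_smul]; exact (add_left_cancel h2).symm
    obtain ⟨hjk, hc⟩ := dir_eq _ _ _ _ (one_ne_zero) hu
    replace hjk := hjk.symm; subst hjk
    have hx : x = a - -coordParity d x (k + 1) • unitVec d (k + 1) := eq_sub_of_add_eq h1.symm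
    have hxk : x k = a k := by
      have := congrFun hx k; simpa [unitVec, hkne', hd1] using this
    have ha : Even (a k) := by
      rw [← hxk]; exact (cp_eq_one_iff d x k).mp hc
    have hx1 : x (k + 1) = a (k + 1) + coordParity d x (k + 1) := by
      have := congrFun hx (k + 1)
      simpa [unitVec, hd1, sub_eq_add_neg] using this
    have hflip : coordParity d a (k + 1) = -coordParity d x (k + 1) := by
      apply cp_flip d x a (k + 1) _ _ hx1
      exact cp_cases d x (k + 1)
    have hcx : -coordParity d x (k + 1) = coordParity d a (k + 1) := by linarith
    have hx' : x = a + -coordParity d a (k + 1) • unitVec d (k + 1) := by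
      rw [hx, ← hcx, neg_neg, neg_smul, sub_neg_eq_add]
    rw [if_pos ha, Q_even a k ha]
    show plaquette d x _ _ = _
    rw [hc, one_smul]
    have hveq : (-coordParity d x (k + 1)) • unitVec d (k + 1)
        = -(-coordParity d a (k + 1) • unitVec d (k + 1)) := by
      rw [hcx, neg_smul, neg_neg]
    rw [hveq, hx']
    exact plaq_flip_v d a (unitVec d k) _
  -- Case 4b : x + v = a + e_k, u = -e_k
  · have h1' : x + coordParity d x j • unitVec d j
        + -coordParity d x (j + 1) • unitVec d (j + 1)
        = x + -coordParity d x (j + 1) • unitVec d (j + 1)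
          + coordParity d x j • unitVec d j := by abel
    rw [h1', ← h2] at h1
    have hu : coordParity d x j • unitVec d j = (-1 : ℤ) • unitVec d k := by
      have h3 : a + unitVec d k + coordParity d x j • unitVec d j = a := h1.symm
      rw [shift_neg h3, neg_smul, one_smul]
    obtain ⟨hjk, hc⟩ := dir_eq _ _ _ _ (by norm_num : (-1 : ℤ) ≠ 0) hu
    replace hjk := hjk.symm; subst hjk
    have hx : x = a + unitVec d k - -coordParity d x (k + 1) • unitVec d (k + 1) :=
      eq_sub_of_add_eq h2.symm
    have hxk : x k = a k + 1 := by
      have := congrFun hx k; simpa [unitVec, hkne', hd1] using this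
    have hnx : ¬ Even (x k) := (cp_eq_neg_one_iff d x k).mp hc
    have ha : Even (a k) := by
      rw [hxk, Int.even_add_one] at hnx; simpa using hnx
    have hx1 : x (k + 1) = a (k + 1) + coordParity d x (k + 1) := by
      have := congrFun hx (k + 1)
      simpa [unitVec, hkne', hd1, sub_eq_add_neg] using this
    have hflip : coordParity d a (k + 1) = -coordParity d x (k + 1) := by
      apply cp_flip d x a (k + 1) _ _ hx1
      exact cp_cases d x (k + 1)
    have hcx : -coordParity d x (k + 1) = coordParity d a (k + 1) := by linarith
    have hx' : x = a + unitVec d k + -coordParity d a (k + 1) • unitVec d (k + 1) := by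
      rw [hx, ← hcx, neg_neg, neg_smul, sub_neg_eq_add]
    rw [if_pos ha, Q_even a k ha]
    show plaquette d x _ _ = _
    rw [hc, neg_one_smul]
    have hveq : (-coordParity d x (k + 1)) • unitVec d (k + 1)
        = -(-coordParity d a (k + 1) • unitVec d (k + 1)) := by
      rw [hcx, neg_smul, neg_neg]
    rw [hveq, hx']
    rw [plaq_flip_v d (a + unitVec d k) (-unitVec d k)
      (-coordParity d a (k + 1) • unitVec d (k + 1))]
    exact plaq_flip_u d a (unitVec d k) _

/-- The family of plaquettes selected by the parity instructions covers every
edge of `ℤ^d` exactly once: each nearest-neighbour edge `{a, a + e_k}` belongs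
to exactly one plaquette of the family. -/
theorem plaquette_partition (d : ℕ) [NeZero d] (hd : 2 ≤ d)
    (a : Fin d → ℤ) (k : Fin d) :
    ∃! Q : Set (Sym2 (Fin d → ℤ)),
      (∃ (x : Fin d → ℤ) (j : Fin d), Q = instrPlaquette d x j) ∧
        s(a, a + unitVec d k) ∈ Q := by
  by_cases ha : Even (a k)
  · refine ⟨instrPlaquette d a k, ⟨⟨a, k, rfl⟩, ?_⟩, ?_⟩
    · rw [Q_even a k ha]
      exact Set.mem_insert _ _
    · rintro Q ⟨⟨x, j, rfl⟩, hmem⟩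
      have h := uniq hd a x k j hmem
      rwa [if_pos ha] at h
  · refine ⟨instrPlaquette d a (k - 1), ⟨⟨a, k - 1, rfl⟩, ?_⟩, ?_⟩
    · rw [Q_odd a k ha]
      exact Set.mem_insert_iff.mpr (Or.inr (Set.mem_insert _ _))
    · rintro Q ⟨⟨x, j, rfl⟩, hmem⟩
      have h := uniq hd a x k j hmem
      rwa [if_neg ha] at h
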